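/- arXiv:1505.05530 — 2 statements merged into one kernel-verified Lean document; each statement's English description precedes it below -/
import Mathlib

section
/- On ℂⁿ viewed as ℝ^{2n} with coordinates (q^k, p_k), for Hermitian matrices A and B, the Poisson bracket of the quadratic functions f_A(ψ) = ½⟨ψ|Aψ⟩ and f_B(ψ) = ½⟨ψ|Bψ⟩ with respect to the canonical Poisson bivector Ω = Σ_k ∂/∂q^k ∧ ∂/∂p_k equals f_{[A,B]}, where [A,B] = −i(AB − BA). -/
open Matrix Complex

noncomputable section

/-- Identify a point of `ℝⁿ × ℝⁿ` (coordinates `(q, p)`) with a vector of `ℂⁿ`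
via `z^k = q^k + i p^k`. -/
def toVecC {n : ℕ} (x : (Fin n → ℝ) × (Fin n → ℝ)) : Fin n → ℂ :=
  fun k => ⟨x.1 k, x.2 k⟩

/-- The real quadratic function `f_A(ψ) = ½⟨ψ|Aψ⟩` associated to a (Hermitian)
matrix `A`, viewed as a function on `ℝⁿ × ℝⁿ ≅ ℂⁿ`. -/
def quadFun {n : ℕ} (A : Matrix (Fin n) (Fin n) ℂ)
    (x : (Fin n → ℝ) × (Fin n → ℝ)) : ℝ :=
  ((1 / 2 : ℂ) * (star (toVecC x) ⬝ᵥ A.mulVec (toVecC x))).re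

namespace PoissonAux

variable {n : ℕ}

/-- `toVecC` as a continuous linear map. -/
def toVecL (n : ℕ) : ((Fin n → ℝ) × (Fin n → ℝ)) →L[ℝ] (Fin n → ℂ) :=
  LinearMap.toContinuousLinearMap
  { toFun := toVecC
    map_add' := by
      intro a b; funext k
      simp [toVecC, Complex.ext_iff]
    map_smul' := by
      intro c a; funext k
      simp [toVecC, Complex.ext_iff, Complex.real_smul] }

@[simp] lemma toVecL_apply (x : (Fin n → ℝ) × (Fin n → ℝ)) : toVecL n x = toVecC x := rfl

/-- The sesquilinear form of `A` as a real-bilinear continuous map. -/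
def bilinL (A : Matrix (Fin n) (Fin n) ℂ) :
    (Fin n → ℂ) →L[ℝ] (Fin n → ℂ) →L[ℝ] ℂ :=
  LinearMap.toContinuousLinearMap
  { toFun := fun u => LinearMap.toContinuousLinearMap
      { toFun := fun v => star u ⬝ᵥ A.mulVec v
        map_add' := by intro v w; simp [Matrix.mulVec_add, dotProduct_add]
        map_smul' := by intro c v; simp [Matrix.mulVec_smul, dotProduct_smul] }
    map_add' := by
      intro u u'; ext v
      simp [add_dotProduct]
    map_smul' := by
      intro c u; ext v
      simp [smul_dotProduct] }

@[simp] lemma bilinL_apply (A : Matrix (Fin n) (Fin n) ℂ) (u v : Fin n → ℂ) :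
    bilinL A u v = star u ⬝ᵥ A.mulVec v := rfl

set_option maxHeartbeats 1000000 in
lemma fderiv_quadFun (A : Matrix (Fin n) (Fin n) ℂ) (x v : (Fin n → ℝ) × (Fin n → ℝ)) :
    fderiv ℝ (quadFun A) x v =
      ((1 / 2 : ℂ) * (star (toVecC x) ⬝ᵥ A.mulVec (toVecC v)
        + star (toVecC v) ⬝ᵥ A.mulVec (toVecC x))).re := by
  set L := toVecL n with hLdef
  have hb := (bilinL A).isBoundedBilinearMap
  have hL : HasFDerivAt (fun y => (L y, L y)) (L.prod L) x := (L.prod L).hasFDerivAt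
  have h1 : HasFDerivAt (fun y => bilinL A (L y) (L y))
      ((hb.deriv (L x, L x)).comp (L.prod L)) x :=
    by have := (hb.hasFDerivAt (L x, L x)).comp x hL; exact this
  have h2 := h1.const_mul ((1 / 2 : ℂ))
  have h3 := (Complex.reCLM.hasFDerivAt.comp x h2)
  have hq : quadFun A = fun y =>
      Complex.reCLM ((1 / 2 : ℂ) * (bilinL A (L y) (L y))) := by
    funext y; rfl
  have h3' : HasFDerivAt (fun y => Complex.reCLM ((1 / 2 : ℂ) * (bilinL A (L y) (L y))))
      (Complex.reCLM.comp ((1 / 2 : ℂ) • (hb.deriv (L x, L x)).comp (L.prod L))) x := h3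
  rw [hq, h3'.fderiv]
  simp [hb.deriv_apply, hLdef]

/-- Conjugation of the sesquilinear form. -/
lemma conj_dot (M : Matrix (Fin n) (Fin n) ℂ) (z w : Fin n → ℂ) :
    (starRingEnd ℂ) (star w ⬝ᵥ M.mulVec z) = star z ⬝ᵥ Mᴴ.mulVec w := by
  simp only [dotProduct, Matrix.mulVec, Matrix.conjTranspose_apply, map_sum,
    Pi.star_apply, Complex.star_def, Finset.mul_sum]
  rw [Finset.sum_comm]
  refine Finset.sum_congr rfl fun k _ => Finset.sum_congr rfl fun j _ => ?_
  simp only [_root_.map_mul, Complex.conj_conj]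
  ring

lemma dot_shift (M : Matrix (Fin n) (Fin n) ℂ) (z w : Fin n → ℂ) :
    star (M.mulVec z) ⬝ᵥ w = star z ⬝ᵥ Mᴴ.mulVec w := by
  simp only [dotProduct, Matrix.mulVec, Matrix.conjTranspose_apply, map_sum,
    Pi.star_apply, Complex.star_def, Finset.mul_sum, Finset.sum_mul]
  rw [Finset.sum_comm]
  refine Finset.sum_congr rfl fun k _ => Finset.sum_congr rfl fun j _ => ?_
  simp only [_root_.map_mul, Complex.conj_conj]
  ring

lemma fderiv_quadFun_herm {A : Matrix (Fin n) (Fin n) ℂ} (hA : A.IsHermitian)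
    (x v : (Fin n → ℝ) × (Fin n → ℝ)) :
    fderiv ℝ (quadFun A) x v = (star (toVecC v) ⬝ᵥ A.mulVec (toVecC x)).re := by
  rw [fderiv_quadFun]
  have h : star (toVecC x) ⬝ᵥ A.mulVec (toVecC v)
      = (starRingEnd ℂ) (star (toVecC v) ⬝ᵥ A.mulVec (toVecC x)) := by
    rw [conj_dot, hA.eq]
  rw [h]
  set s := star (toVecC v) ⬝ᵥ A.mulVec (toVecC x)
  simp [Complex.ext_iff, Complex.mul_re, Complex.add_re, Complex.add_im]
  ring

lemma toVecC_single_q (k : Fin n) :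
    toVecC ((Pi.single k 1 : Fin n → ℝ), 0) = Pi.single k (1 : ℂ) := by
  funext j
  simp [toVecC, Pi.single_apply, Complex.ext_iff, apply_ite Complex.re, apply_ite Complex.im]

lemma toVecC_single_p (k : Fin n) :
    toVecC (0, (Pi.single k 1 : Fin n → ℝ)) = Pi.single k (Complex.I) := by
  funext j
  simp [toVecC, Pi.single_apply, Complex.ext_iff, apply_ite Complex.re, apply_ite Complex.im]

end PoissonAux

open PoissonAux in
/-- The Poisson bracket of `f_A` and `f_B` with respect to
`Ω = Σ_k ∂/∂q^k ∧ ∂/∂p_k` equals `f_{[A,B]}`, where `[A,B] = -i(AB - BA)`. -/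
theorem poisson_bracket_quadFun {n : ℕ}
    (A B : Matrix (Fin n) (Fin n) ℂ) (hA : A.IsHermitian) (hB : B.IsHermitian)
    (x : (Fin n → ℝ) × (Fin n → ℝ)) :
    ∑ k : Fin n,
      (fderiv ℝ (quadFun A) x (Pi.single k 1, 0) *
         fderiv ℝ (quadFun B) x (0, Pi.single k 1) -
       fderiv ℝ (quadFun A) x (0, Pi.single k 1) *
         fderiv ℝ (quadFun B) x (Pi.single k 1, 0))
    = quadFun ((-Complex.I) • (A * B - B * A)) x := by
  set z := toVecC x with hz
  have hq : ∀ (M : Matrix (Fin n) (Fin n) ℂ) (k : Fin n),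
      fderiv ℝ (quadFun M) x (Pi.single k 1, 0) = (M.mulVec z k).re → True := fun _ _ _ => trivial
  have hAq : ∀ k : Fin n, fderiv ℝ (quadFun A) x (Pi.single k 1, 0) = (A.mulVec z k).re := by
    intro k
    rw [fderiv_quadFun_herm hA, toVecC_single_q, show star (Pi.single k (1:ℂ)) = (Pi.single k 1 : Fin n → ℂ) by
      funext j; simp [Pi.single_apply, apply_ite (star : ℂ → ℂ)], single_dotProduct, one_mul]
  have hAp : ∀ k : Fin n, fderiv ℝ (quadFun A) x (0, Pi.single k 1) = (A.mulVec z k).im := by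
    intro k
    rw [fderiv_quadFun_herm hA, toVecC_single_p]
    have : star (Pi.single k Complex.I) = (Pi.single k (-Complex.I) : Fin n → ℂ) := by
      funext j; simp [Pi.single_apply, apply_ite (star : ℂ → ℂ), Complex.star_def]
    rw [this, single_dotProduct]
    simp [Complex.mul_re, hz]
  have hBq : ∀ k : Fin n, fderiv ℝ (quadFun B) x (Pi.single k 1, 0) = (B.mulVec z k).re := by
    intro k
    rw [fderiv_quadFun_herm hB, toVecC_single_q, show star (Pi.single k (1:ℂ)) = (Pi.single k 1 : Fin n → ℂ) by
      funext j; simp [Pi.single_apply, apply_ite (star : ℂ → ℂ)], single_dotProduct, one_mul]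
  have hBp : ∀ k : Fin n, fderiv ℝ (quadFun B) x (0, Pi.single k 1) = (B.mulVec z k).im := by
    intro k
    rw [fderiv_quadFun_herm hB, toVecC_single_p]
    have : star (Pi.single k Complex.I) = (Pi.single k (-Complex.I) : Fin n → ℂ) := by
      funext j; simp [Pi.single_apply, apply_ite (star : ℂ → ℂ), Complex.star_def]
    rw [this, single_dotProduct]
    simp [Complex.mul_re, hz]
  simp only [hAq, hAp, hBq, hBp]
  -- LHS = Im (star (A z) ⬝ᵥ B z)
  set s := star z ⬝ᵥ (A * B).mulVec z with hs
  have hlhs : ∑ k : Fin n,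
      ((A.mulVec z k).re * (B.mulVec z k).im - (A.mulVec z k).im * (B.mulVec z k).re)
      = s.im := by
    have h1 : star (A.mulVec z) ⬝ᵥ B.mulVec z = s := by
      rw [dot_shift, hA.eq, hs, ← Matrix.mulVec_mulVec]
    rw [← h1]
    simp only [dotProduct, Complex.im_sum]
    refine Finset.sum_congr rfl fun k _ => ?_
    simp [Complex.mul_im]
    ring
  have hconj : star z ⬝ᵥ (B * A).mulVec z = (starRingEnd ℂ) s := by
    rw [hs, conj_dot, Matrix.conjTranspose_mul, hA.eq, hB.eq]
  rw [hlhs]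
  unfold quadFun
  rw [← hz]
  rw [Matrix.smul_mulVec, Matrix.sub_mulVec, dotProduct_smul, dotProduct_sub, ← hs, hconj]
  simp [Complex.mul_re, Complex.mul_im, Complex.sub_re, Complex.sub_im, smul_eq_mul]
  ring

end
end

section
/- On ℂⁿ ≅ ℝ^{2n}, for Hermitian matrices A and B, the pairing of the Euclidean contravariant metric G = Σ_k (∂/∂q^k ⊗ ∂/∂q^k + ∂/∂p_k ⊗ ∂/∂p_k) on the differentials of the quadratic functions f_A and f_B equals f_{A∘B}, where A∘B = AB + BA is the anticommutator. -/
open Matrix Complex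

noncomputable section

def coordC {n : ℕ} (k : Fin n) : ((Fin n → ℝ) × (Fin n → ℝ)) →L[ℝ] ℂ :=
  Complex.equivRealProdCLM.symm.toContinuousLinearMap.comp
    (((ContinuousLinearMap.proj k).comp (ContinuousLinearMap.fst ℝ (Fin n → ℝ) (Fin n → ℝ))).prod
      ((ContinuousLinearMap.proj k).comp (ContinuousLinearMap.snd ℝ (Fin n → ℝ) (Fin n → ℝ))))

lemma coordC_apply {n : ℕ} (k : Fin n) (x : (Fin n → ℝ) × (Fin n → ℝ)) :
    coordC k x = toVecC x k := by
  simp [coordC, toVecC, Complex.ext_iff]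

lemma quadFun_eq {n : ℕ} (A : Matrix (Fin n) (Fin n) ℂ) (x : (Fin n → ℝ) × (Fin n → ℝ)) :
    quadFun A x = ((1 / 2 : ℂ) *
      ∑ j, (starRingEnd ℂ) (toVecC x j) * ∑ i, A j i * toVecC x i).re := by
  simp [quadFun, dotProduct, Matrix.mulVec]

lemma hasFDerivAt_quadFun {n : ℕ} (A : Matrix (Fin n) (Fin n) ℂ)
    (x : (Fin n → ℝ) × (Fin n → ℝ)) :
    HasFDerivAt (quadFun A)
      (Complex.reCLM.comp ((1 / 2 : ℂ) • ∑ j,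
        ((starRingEnd ℂ) (toVecC x j) • ∑ i, A j i • coordC i
          + (∑ i, A j i * toVecC x i) •
              (Complex.conjCLE.toContinuousLinearMap.comp (coordC j))))) x := by
  have hz : ∀ i, HasFDerivAt (fun y : (Fin n → ℝ) × (Fin n → ℝ) => toVecC y i) (coordC i) x := by
    intro i
    have := (coordC (n := n) i).hasFDerivAt (x := x)
    simpa [funext (coordC_apply i)] using this
  have hc : ∀ j, HasFDerivAt (fun y => (starRingEnd ℂ) (toVecC y j))
      (Complex.conjCLE.toContinuousLinearMap.comp (coordC j)) x := by
    intro j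
    have : HasFDerivAt (fun y : (Fin n → ℝ) × (Fin n → ℝ) =>
        Complex.conjCLE.toContinuousLinearMap (coordC j y))
        (Complex.conjCLE.toContinuousLinearMap.comp (coordC j)) x :=
      (Complex.conjCLE.toContinuousLinearMap.hasFDerivAt).comp x ((coordC j).hasFDerivAt)
    simpa [coordC_apply] using this
  have hm : ∀ j, HasFDerivAt (fun y => ∑ i, A j i * toVecC y i)
      (∑ i, A j i • coordC i) x := by
    intro j
    exact HasFDerivAt.fun_sum fun i _ => ((hz i).const_mul (A j i))
  have hsum : HasFDerivAt (fun y => ∑ j, (starRingEnd ℂ) (toVecC y j) * ∑ i, A j i * toVecC y i)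
      (∑ j, ((starRingEnd ℂ) (toVecC x j) • ∑ i, A j i • coordC i
        + (∑ i, A j i * toVecC x i) •
            (Complex.conjCLE.toContinuousLinearMap.comp (coordC j)))) x :=
    HasFDerivAt.fun_sum fun j _ => (hc j).mul (hm j)
  have hmul := hsum.const_mul ((1 / 2 : ℂ))
  have hre := (Complex.reCLM.hasFDerivAt).comp x hmul
  have : quadFun A = fun y => Complex.reCLM ((1 / 2 : ℂ) *
      ∑ j, (starRingEnd ℂ) (toVecC y j) * ∑ i, A j i * toVecC y i) := by
    funext y; rw [quadFun_eq]; rfl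
  rw [this]
  exact hre

lemma fderiv_quadFun {n : ℕ} (A : Matrix (Fin n) (Fin n) ℂ)
    (x v : (Fin n → ℝ) × (Fin n → ℝ)) :
    fderiv ℝ (quadFun A) x v = ((1 / 2 : ℂ) *
      ∑ j, ((starRingEnd ℂ) (toVecC x j) * ∑ i, A j i * toVecC v i
        + (∑ i, A j i * toVecC x i) * (starRingEnd ℂ) (toVecC v j))).re := by
  rw [(hasFDerivAt_quadFun A x).fderiv]
  simp [ContinuousLinearMap.sum_apply, coordC_apply, Finset.mul_sum, mul_comm]

lemma fderiv_quadFun_q {n : ℕ} {A : Matrix (Fin n) (Fin n) ℂ} (hA : A.IsHermitian)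
    (x : (Fin n → ℝ) × (Fin n → ℝ)) (k : Fin n) :
    fderiv ℝ (quadFun A) x (Pi.single k 1, 0) = (∑ i, A k i * toVecC x i).re := by
  rw [fderiv_quadFun]
  have hv : ∀ j, toVecC ((Pi.single k 1 : Fin n → ℝ), (0 : Fin n → ℝ)) j
      = if j = k then 1 else 0 := by
    intro j; simp [toVecC, Pi.single_apply, Complex.ext_iff]; split <;> simp
  simp only [hv]
  rw [Finset.sum_congr rfl (fun j _ => by
    rw [show (∑ i, A j i * if i = k then 1 else 0) = A j k by
      simp [mul_ite]
      , show ((starRingEnd ℂ) (if j = k then (1:ℂ) else 0)) = if j = k then 1 else 0 by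
      split <;> simp])]
  rw [Finset.sum_add_distrib]
  rw [show (∑ j, (∑ i, A j i * toVecC x i) * if j = k then 1 else 0) = ∑ i, A k i * toVecC x i by
    simp [mul_ite]]
  have h1 : ∑ j, (starRingEnd ℂ) (toVecC x j) * A j k
      = (starRingEnd ℂ) (∑ i, A k i * toVecC x i) := by
    rw [map_sum]
    refine Finset.sum_congr rfl fun j _ => ?_
    rw [_root_.map_mul]
    have : (starRingEnd ℂ) (A k j) = A j k := by
      conv_rhs => rw [← hA]
      simp [Matrix.conjTranspose_apply]
    rw [this, mul_comm]
  rw [h1]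
  set w := ∑ i, A k i * toVecC x i
  rw [add_comm, Complex.add_conj]
  simp

lemma fderiv_quadFun_p {n : ℕ} {A : Matrix (Fin n) (Fin n) ℂ} (hA : A.IsHermitian)
    (x : (Fin n → ℝ) × (Fin n → ℝ)) (k : Fin n) :
    fderiv ℝ (quadFun A) x ((0 : Fin n → ℝ), Pi.single k 1) = (∑ i, A k i * toVecC x i).im := by
  rw [fderiv_quadFun]
  have hv : ∀ j, toVecC ((0 : Fin n → ℝ), (Pi.single k 1 : Fin n → ℝ)) j
      = if j = k then Complex.I else 0 := by
    intro j; simp [toVecC, Pi.single_apply, Complex.ext_iff]; split <;> simp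
  simp only [hv]
  rw [Finset.sum_congr rfl (fun j _ => by
    rw [show (∑ i, A j i * if i = k then Complex.I else 0) = A j k * Complex.I by
      simp [mul_ite]
      , show ((starRingEnd ℂ) (if j = k then Complex.I else 0)) = if j = k then -Complex.I else 0 by
      split <;> simp])]
  rw [Finset.sum_add_distrib]
  rw [show (∑ j, (∑ i, A j i * toVecC x i) * if j = k then -Complex.I else 0)
      = (∑ i, A k i * toVecC x i) * -Complex.I by simp [mul_ite]]
  have h1 : ∑ j, (starRingEnd ℂ) (toVecC x j) * (A j k * Complex.I)
      = (starRingEnd ℂ) (∑ i, A k i * toVecC x i) * Complex.I := by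
    rw [map_sum, Finset.sum_mul]
    refine Finset.sum_congr rfl fun j _ => ?_
    rw [_root_.map_mul]
    have : (starRingEnd ℂ) (A k j) = A j k := by
      conv_rhs => rw [← hA]
      simp [Matrix.conjTranspose_apply]
    rw [this]; ring
  rw [h1]
  set w := ∑ i, A k i * toVecC x i
  simp [Complex.ext_iff, Complex.mul_re, Complex.mul_im]
  ring

/-- The pairing of the Euclidean contravariant metric
`G = Σ_k (∂/∂q^k ⊗ ∂/∂q^k + ∂/∂p_k ⊗ ∂/∂p_k)` on the differentials of `f_A`
and `f_B` equals `f_{A∘B}`, where `A∘B = AB + BA`. -/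
theorem metric_pairing_quadFun {n : ℕ}
    (A B : Matrix (Fin n) (Fin n) ℂ) (hA : A.IsHermitian) (hB : B.IsHermitian)
    (x : (Fin n → ℝ) × (Fin n → ℝ)) :
    ∑ k : Fin n,
      (fderiv ℝ (quadFun A) x (Pi.single k 1, 0) *
         fderiv ℝ (quadFun B) x (Pi.single k 1, 0) +
       fderiv ℝ (quadFun A) x (0, Pi.single k 1) *
         fderiv ℝ (quadFun B) x (0, Pi.single k 1))
    = quadFun (A * B + B * A) x := by
  have hmv : ∀ (M : Matrix (Fin n) (Fin n) ℂ) (k : Fin n),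
      (∑ i, M k i * toVecC x i) = (M *ᵥ toVecC x) k := by
    intro M k; simp [Matrix.mulVec, dotProduct]
  simp only [fderiv_quadFun_q hA, fderiv_quadFun_q hB, fderiv_quadFun_p hA,
    fderiv_quadFun_p hB, hmv]
  set z := toVecC x with hz
  have habs : ∀ a b : ℂ, a.re * b.re + a.im * b.im = ((starRingEnd ℂ) a * b).re := by
    intro a b; simp [Complex.mul_re]
  have h1 : ∑ k : Fin n, (((A *ᵥ z) k).re * ((B *ᵥ z) k).re
        + ((A *ᵥ z) k).im * ((B *ᵥ z) k).im)
      = (star (A *ᵥ z) ⬝ᵥ (B *ᵥ z)).re := by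
    simp only [dotProduct, Pi.star_apply, Complex.re_sum]
    exact Finset.sum_congr rfl fun k _ => habs _ _
  rw [h1]
  have key : star (A *ᵥ z) ⬝ᵥ (B *ᵥ z) = star z ⬝ᵥ ((A * B) *ᵥ z) := by
    rw [Matrix.star_mulVec, Matrix.dotProduct_mulVec, Matrix.vecMul_vecMul, hA,
      ← Matrix.dotProduct_mulVec]
  rw [key]
  have hconj : star z ⬝ᵥ ((B * A) *ᵥ z) = (starRingEnd ℂ) (star z ⬝ᵥ ((A * B) *ᵥ z)) := by
    rw [Matrix.star_dotProduct, Matrix.star_mulVec, Matrix.dotProduct_mulVec,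
      Matrix.conjTranspose_mul, hB, hA]
    rfl
  simp only [quadFun]
  rw [← hz, Matrix.add_mulVec, dotProduct_add, hconj, Complex.add_conj]
  simp [Complex.mul_re]

end
end
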